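/- arXiv:1402.5849 — 5 statements merged into one kernel-verified Lean document; each statement's English description precedes it below -/
import Mathlib

section
/- In an F-restriction semigroup, the maximum element of the σ-class of any projection is a multiplicative identity for the semigroup; consequently every F-restriction semigroup is a monoid whose identity is the maximum projection. -/
/-- A restriction semigroup: a semigroup with unary operations `star` (`^*`) and
`plus` (`^+`) satisfying the standard identities. -/
class RestrictionSemigroup (S : Type*) extends Semigroup S where
  star : S → S
  plus : S → S
  mul_star : ∀ x : S, x * star x = x
  star_comm : ∀ x y : S, star x * star y = star y * star x
  star_mul_star : ∀ x y : S, star (x * star y) = star x * star y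
  star_mul : ∀ x y : S, star x * y = y * star (x * y)
  plus_mul : ∀ x : S, plus x * x = x
  plus_comm : ∀ x y : S, plus x * plus y = plus y * plus x
  plus_mul_plus : ∀ x y : S, plus (plus x * y) = plus x * plus y
  mul_plus : ∀ x y : S, x * plus y = plus (x * y) * x
  star_plus : ∀ x : S, star (plus x) = plus x
  plus_star : ∀ x : S, plus (star x) = star x

namespace RestrictionSemigroup

variable {S : Type*} [RestrictionSemigroup S]

/-- A projection of a restriction semigroup: an element of the form `x^*`. -/
def IsProjection (e : S) : Prop := ∃ x : S, star x = e

/-- The natural partial order: `a ≤ b` iff `a = e * b` for some projection `e`. -/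
def natLe (a b : S) : Prop := ∃ e : S, IsProjection e ∧ a = e * b

/-- The least congruence `σ` identifying all projections:
`a σ b` iff `e * a = e * b` for some projection `e`. -/
def sigmaRel (a b : S) : Prop := ∃ e : S, IsProjection e ∧ e * a = e * b

end RestrictionSemigroup

namespace RestrictionSemigroup

variable {S : Type*} [RestrictionSemigroup S]

lemma proj_plus_eq {e : S} (he : IsProjection e) : plus e = e := by
  obtain ⟨x, rfl⟩ := he; exact plus_star x

lemma proj_star_eq {e : S} (he : IsProjection e) : star e = e := by
  obtain ⟨x, rfl⟩ := he
  rw [← plus_star x, star_plus, plus_star]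

lemma plus_isProj (x : S) : IsProjection (plus x : S) :=
  ⟨plus x, star_plus x⟩

lemma proj_idem {e : S} (he : IsProjection e) : e * e = e := by
  have h := mul_star e
  rwa [proj_star_eq he] at h

lemma proj_mul_isProj {e f : S} (he : IsProjection e) (hf : IsProjection f) :
    IsProjection (e * f) := by
  obtain ⟨a, rfl⟩ := he; obtain ⟨b, rfl⟩ := hf
  exact ⟨a * star b, star_mul_star a b⟩

lemma proj_comm {e f : S} (he : IsProjection e) (hf : IsProjection f) :
    e * f = f * e := by
  obtain ⟨a, rfl⟩ := he; obtain ⟨b, rfl⟩ := hf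
  exact star_comm a b

lemma sigma_symm {a b : S} (h : sigmaRel a b) : sigmaRel b a := by
  obtain ⟨p, hp, h⟩ := h; exact ⟨p, hp, h.symm⟩

lemma sigma_trans {a b c : S} (h1 : sigmaRel a b) (h2 : sigmaRel b c) :
    sigmaRel a c := by
  obtain ⟨p, hp, h1⟩ := h1; obtain ⟨q, hq, h2⟩ := h2
  refine ⟨q * p, proj_mul_isProj hq hp, ?_⟩
  calc q * p * a = q * (p * a) := mul_assoc _ _ _
    _ = q * (p * b) := by rw [h1]
    _ = (q * p) * b := (mul_assoc _ _ _).symm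
    _ = (p * q) * b := by rw [proj_comm hq hp]
    _ = p * (q * b) := mul_assoc _ _ _
    _ = p * (q * c) := by rw [h2]
    _ = (p * q) * c := (mul_assoc _ _ _).symm
    _ = (q * p) * c := by rw [proj_comm hp hq]

lemma proj_sigma_proj {e f : S} (he : IsProjection e) (hf : IsProjection f) :
    sigmaRel e f := by
  refine ⟨e * f, proj_mul_isProj he hf, ?_⟩
  calc e * f * e = e * (f * e) := mul_assoc _ _ _
    _ = e * (e * f) := by rw [proj_comm hf he]
    _ = (e * e) * f := (mul_assoc _ _ _).symm
    _ = e * f := by rw [proj_idem he]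
    _ = e * (f * f) := by rw [proj_idem hf]
    _ = e * f * f := (mul_assoc _ _ _).symm

lemma natLe_canonical {a b : S} (h : natLe a b) : a = plus a * b := by
  obtain ⟨g, hg, rfl⟩ := h
  have h1 : plus (g * b) = g * plus b := by
    conv_lhs => rw [← proj_plus_eq hg]
    rw [plus_mul_plus, proj_plus_eq hg]
  rw [h1, mul_assoc, plus_mul]

end RestrictionSemigroup

open RestrictionSemigroup in
/-- In an F-restriction semigroup, the maximum element of the σ-class of any
projection is a multiplicative identity; consequently the semigroup is a monoid
whose identity is the maximum projection. -/
theorem stmt10 {S : Type*} [RestrictionSemigroup S]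
    (hF : ∀ a : S, ∃ m : S, sigmaRel a m ∧ ∀ b : S, sigmaRel a b → natLe b m)
    (e m : S) (he : IsProjection e)
    (hm : sigmaRel e m ∧ ∀ b : S, sigmaRel e b → natLe b m) :
    (∀ x : S, m * x = x ∧ x * m = x) ∧
    IsProjection m ∧ (∀ f : S, IsProjection f → natLe f m) := by
  obtain ⟨_, hmax⟩ := hm
  -- plus m ≤ m, hence plus m = m
  have hple : natLe (plus m) m := hmax _ (proj_sigma_proj he (plus_isProj m))
  have hpm : plus m = m := by
    have h := natLe_canonical hple
    rwa [proj_plus_eq (plus_isProj m), plus_mul] at h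
  have hmproj : IsProjection m := ⟨plus m, by rw [star_plus, hpm]⟩
  -- every projection f satisfies f * m = f
  have hfm : ∀ f : S, IsProjection f → f * m = f := by
    intro f hf
    have hle : natLe f m := hmax _ (sigma_symm (proj_sigma_proj hf he))
    have h := natLe_canonical hle
    rw [proj_plus_eq hf] at h
    exact h.symm
  have hmf : ∀ f : S, IsProjection f → m * f = f := by
    intro f hf
    rw [proj_comm hmproj hf]
    exact hfm f hf
  refine ⟨fun x => ⟨?_, ?_⟩, hmproj, fun f hf => ⟨f, hf, (hfm f hf).symm⟩⟩
  · calc m * x = m * (plus x * x) := by rw [plus_mul]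
      _ = (m * plus x) * x := (mul_assoc _ _ _).symm
      _ = plus x * x := by rw [hmf _ (plus_isProj x)]
      _ = x := plus_mul x
  · calc x * m = (x * star x) * m := by rw [mul_star]
      _ = x * (star x * m) := mul_assoc _ _ _
      _ = x * star x := by rw [hfm _ ⟨x, rfl⟩]
      _ = x := mul_star x
end

section
/- A W-product W(T,Y) is a monoid if and only if the semilattice Y has a greatest element (identity), if and only if W(T,Y) is F-restriction. -/
/-- The underlying set of the W-product `W(T,Y)`: pairs `(t * y, t)`. -/
def WProd {T Y : Type*} [Monoid T] [SemilatticeInf Y] (act : T → Y → Y) : Type _ :=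
  {p : Y × T // ∃ y : Y, p.1 = act p.2 y}

/-- The multiplication of the W-product:
`(t * y, t)(s * x, s) = (t * y ⊓ (t s) * x, t s)`. -/
noncomputable def wmul {T Y : Type*} [Monoid T] [SemilatticeInf Y] (act : T → Y → Y)
    (hideal : ∀ (t : T) (y x : Y), x ≤ act t y → ∃ z : Y, x = act t z)
    (a b : WProd act) : WProd act :=
  ⟨(a.1.1 ⊓ act (a.1.2 * b.1.2) (Classical.choose b.2), a.1.2 * b.1.2), by
    obtain ⟨z, hz⟩ :=
      hideal (a.1.2 * b.1.2) (Classical.choose b.2)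
        (a.1.1 ⊓ act (a.1.2 * b.1.2) (Classical.choose b.2)) inf_le_right
    exact ⟨z, hz⟩⟩

/-- A W-product `W(T,Y)` (given by a left action of a monoid `T` on a
semilattice `Y` by order-embeddings whose ranges are order ideals) is a monoid
(has a two-sided multiplicative identity) iff `Y` has a greatest element
(an identity for `⊓`) iff `W(T,Y)` is F-restriction. Here F-restriction is
expressed via the description of `σ` and of the natural partial order on
`W(T,Y)`: `(a,t) σ (b,s)` iff `t = s`, and then `(a,t) ≤ (b,t)` iff `a ≤ b`;
so every σ-class has a maximum iff for each `t` there is a maximum element of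
`W(T,Y)` with second coordinate `t`. -/
theorem stmt14 {T Y : Type*} [Monoid T] [SemilatticeInf Y] (act : T → Y → Y)
    -- `act` is a left action
    (hact_one : ∀ y : Y, act 1 y = y)
    (hact_mul : ∀ (s t : T) (y : Y), act (s * t) y = act s (act t y))
    -- by order-embeddings
    (hemb : ∀ (t : T) (y y' : Y), act t y ≤ act t y' ↔ y ≤ y')
    -- whose ranges are order ideals
    (hideal : ∀ (t : T) (y x : Y), x ≤ act t y → ∃ z : Y, x = act t z) :
    -- `W(T,Y)` is a monoid:
    ((∃ e : WProd act, ∀ w : WProd act,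
        wmul act hideal e w = w ∧ wmul act hideal w e = w) ↔
      -- iff `Y` has an identity (greatest element):
      (∃ top : Y, ∀ y : Y, y ≤ top)) ∧
    -- iff `W(T,Y)` is F-restriction:
    ((∃ top : Y, ∀ y : Y, y ≤ top) ↔
      (∀ t : T, ∃ m : WProd act, m.1.2 = t ∧
        ∀ w : WProd act, w.1.2 = t → w.1.1 ≤ m.1.1)) := by
  constructor
  · constructor
    · rintro ⟨e, he⟩
      refine ⟨e.1.1, fun y => ?_⟩
      set w : WProd act := ⟨(y, 1), ⟨y, (hact_one y).symm⟩⟩ with hwdef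
      have h := (he w).1
      have h1 := congrArg (fun p : WProd act => p.1.1) h
      have : e.1.1 ⊓ act (e.1.2 * w.1.2) (Classical.choose w.2) = y := h1
      calc y = e.1.1 ⊓ act (e.1.2 * w.1.2) (Classical.choose w.2) := this.symm
        _ ≤ e.1.1 := inf_le_left
    · rintro ⟨top, htop⟩
      refine ⟨⟨(top, 1), ⟨top, (hact_one top).symm⟩⟩, fun w => ?_⟩
      constructor
      · apply Subtype.ext
        apply Prod.ext
        · show top ⊓ act (1 * w.1.2) (Classical.choose w.2) = w.1.1
          have hz := Classical.choose_spec w.2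
          rw [one_mul, ← hz]
          exact inf_eq_right.mpr (htop _)
        · exact one_mul _
      · apply Subtype.ext
        apply Prod.ext
        · set e : WProd act := ⟨(top, 1), ⟨top, (hact_one top).symm⟩⟩ with hedef
          show w.1.1 ⊓ act (w.1.2 * 1) (Classical.choose e.2) = w.1.1
          have hz := Classical.choose_spec e.2
          have hztop : Classical.choose e.2 = top := by
            have := hact_one (Classical.choose e.2)
            rw [← this]
            exact hz.symm
          rw [mul_one, hztop]
          obtain ⟨y, hy⟩ := w.2
          apply inf_eq_left.mpr
          rw [hy]
          exact (hemb _ _ _).mpr (htop y)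
        · exact mul_one _
  · constructor
    · rintro ⟨top, htop⟩ t
      refine ⟨⟨(act t top, t), ⟨top, rfl⟩⟩, rfl, fun w hw => ?_⟩
      obtain ⟨y, hy⟩ := w.2
      rw [hy, hw]
      exact (hemb t y top).mpr (htop y)
    · intro h
      obtain ⟨m, hm2, hm⟩ := h 1
      exact ⟨m.1.1, fun y => hm ⟨(y, 1), ⟨y, (hact_one y).symm⟩⟩ rfl⟩
end

section
/- Let * be an order-preserving left action of a monoid T on a poset X, let Y ⊆ X be an order ideal of X that is a meet-semilattice under the induced order, and suppose the induced partial action · of T on Y (t·y defined iff t*y ∈ Y, in which case t·y = t*y) satisfies axioms (A),(B),(C), where ∘ denotes the reverse right partial action. Assume additionally that for all t ∈ T, x ∈ X, y ∈ Y: if x ≤ t*y then x = t*z for some z ≤ y. Then for any x, y ∈ Y and s ∈ T such that x∘s is defined, the meet x ∧ s*y exists in X and equals s·((x∘s) ∧ y). -/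
/-- Let `*` (here `act`) be an order-preserving left action of a monoid `T` on a
poset `X`, and let `Y ⊆ X` be an order ideal of `X` that is a meet-semilattice
under the induced order. The induced partial action `·` of `T` on `Y`
(`t · y` defined iff `t * y ∈ Y`, and then `t · y = t * y`) is assumed to
restrict to order-isomorphisms (axiom (B) is the hypothesis `hB` below; axioms
(A) and (C) for the induced action follow from, resp. are not needed beyond,
the stated hypotheses). Suppose moreover that whenever `x ≤ t * y` with `y ∈ Y`
there is `z ≤ y` with `x = t * z`. Then for all `x, y ∈ Y` and `s ∈ T` such that
`x ∘ s` is defined (say `x ∘ s = w`, i.e. `w ∈ Y` with `s * w = x`), the meet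
`x ∧ s * y` exists in `X` and equals `s · ((x ∘ s) ∧ y)`, i.e. `s * m` where `m`
is the meet of `w` and `y` in the semilattice `Y`. -/
theorem stmt16 {T X : Type*} [Monoid T] [PartialOrder X]
    (act : T → X → X)
    -- `act` is a left action
    (hact_one : ∀ x : X, act 1 x = x)
    (hact_mul : ∀ (s t : T) (x : X), act (s * t) x = act s (act t x))
    -- `act` is order-preserving
    (hmono : ∀ (t : T) (x x' : X), x ≤ x' → act t x ≤ act t x')
    (Y : Set X)
    -- `Y` is an order ideal of `X`
    (hYideal : ∀ x y : X, y ∈ Y → x ≤ y → x ∈ Y)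
    -- (B): the induced partial maps on `Y` are order-reflecting (hence
    -- order-isomorphisms onto their ranges)
    (hB : ∀ (t : T) (z w : X), z ∈ Y → w ∈ Y → act t z ∈ Y → act t w ∈ Y →
      (act t z ≤ act t w ↔ z ≤ w))
    -- condition (5) of the paper: `x ≤ t * y` with `y ∈ Y` implies
    -- `x = t * z` for some `z ≤ y`
    (hstar : ∀ (t : T) (x y : X), y ∈ Y → x ≤ act t y → ∃ z, z ≤ y ∧ x = act t z) :
    ∀ (s : T) (x y : X), x ∈ Y → y ∈ Y →
      ∀ w : X, w ∈ Y → act s w = x →  -- `w = x ∘ s`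
      ∀ m : X, m ∈ Y → m ≤ w → m ≤ y →
        (∀ c ∈ Y, c ≤ w → c ≤ y → c ≤ m) →  -- `m = (x ∘ s) ∧ y` in `Y`
      IsGLB {x, act s y} (act s m) := by
  intro s x y hx hy w hw hsw m hm hmw hmy hmax
  constructor
  · intro a ha
    rcases ha with rfl | ha
    · exact hsw ▸ hmono s m w hmw
    · rcases ha with rfl
      exact hmono s m y hmy
  · intro c hc
    have hcx : c ≤ x := hc (by simp)
    have hcy : c ≤ act s y := hc (by simp)
    have hcY : c ∈ Y := hYideal c x hx hcx
    obtain ⟨z, hzw, hcz⟩ := hstar s c w hw (hsw ▸ hcx)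
    obtain ⟨z', hz'y, hcz'⟩ := hstar s c y hy hcy
    have hzY : z ∈ Y := hYideal z w hw hzw
    have hz'Y : z' ∈ Y := hYideal z' y hy hz'y
    have : z ≤ z' := (hB s z z' hzY hz'Y (hcz ▸ hcY) (hcz' ▸ hcY)).mp
      (le_of_eq (hcz ▸ hcz'))
    have hzm : z ≤ m := hmax z hzY hzw (this.trans hz'y)
    exact hcz ▸ hmono s z m hzm
end

section
/- Let T be a monoid, Y a semilattice with identity ε, and let (*, •) be a double action of T on Y (a left action * and a right action • satisfying t*(x∧y) = t*x ∧ t*y, (x∧y)•t = x•t ∧ y•t, (t*x)•t = ε•t ∧ x, and t*(x•t) = x ∧ t*ε). Define the partial map t·y to be defined iff y ≤ ε•t, in which case t·y = t*y. Then · is a partially defined action of T on Y: (ts)·y is defined iff s·y and t·(s·y) are defined, in which case they agree; moreover for each t the map y ↦ t·y is an order-isomorphism from the principal ideal generated by ε•t onto the principal ideal generated by t*ε. -/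
/-- Let `T` be a monoid, `Y` a semilattice with identity `eps` (a greatest
element), and `(l, r)` a double action of `T` on `Y`. Define the partial map
`t · y` to be defined iff `y ≤ eps • t`, in which case `t · y = t * y = l t y`.
Then `·` is a partially defined action of `T` on `Y`: `1 · y = y`;
`(ts) · y` is defined iff `s · y` and `t · (s · y)` are defined, in which case
they agree; and for each `t` the map `y ↦ t · y` is an order-isomorphism from
the principal ideal generated by `eps • t` onto the principal ideal generated
by `t * eps`. -/
theorem stmt18 {T Y : Type*} [Monoid T] [SemilatticeInf Y]
    (eps : Y) (heps : ∀ y : Y, y ≤ eps)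
    (l : T → Y → Y) (r : Y → T → Y)
    -- `l` is a left action, `r` a right action
    (hl_one : ∀ y : Y, l 1 y = y)
    (hl_mul : ∀ (s t : T) (y : Y), l (s * t) y = l s (l t y))
    (hr_one : ∀ y : Y, r y 1 = y)
    (hr_mul : ∀ (s t : T) (y : Y), r y (s * t) = r (r y s) t)
    -- both preserve meets
    (hl_inf : ∀ (t : T) (x y : Y), l t (x ⊓ y) = l t x ⊓ l t y)
    (hr_inf : ∀ (t : T) (x y : Y), r (x ⊓ y) t = r x t ⊓ r y t)
    -- compatibility conditions of a double action
    (hrl : ∀ (t : T) (x : Y), r (l t x) t = r eps t ⊓ x)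
    (hlr : ∀ (t : T) (x : Y), l t (r x t) = x ⊓ l t eps) :
    -- `1 · y` is defined and equals `y`
    (∀ y : Y, y ≤ r eps 1 ∧ l 1 y = y) ∧
    -- (PDA): `(ts) · y` is defined iff `s · y` and `t · (s · y)` are defined
    (∀ (t s : T) (y : Y), y ≤ r eps (t * s) ↔ (y ≤ r eps s ∧ l s y ≤ r eps t)) ∧
    -- ... in which case they agree
    (∀ (t s : T) (y : Y), y ≤ r eps (t * s) → l (t * s) y = l t (l s y)) ∧
    -- `y ↦ t · y` is an order-isomorphism from `(eps • t)↓` onto `(t * eps)↓`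
    (∀ t : T,
      (∀ y : Y, y ≤ r eps t → l t y ≤ l t eps) ∧
      (∀ x : Y, x ≤ l t eps → ∃ y : Y, y ≤ r eps t ∧ l t y = x) ∧
      (∀ y y' : Y, y ≤ r eps t → y' ≤ r eps t → (l t y ≤ l t y' ↔ y ≤ y'))) := by
  have lmono : ∀ (t : T) {x y : Y}, x ≤ y → l t x ≤ l t y := by
    intro t x y h
    have : l t (x ⊓ y) = l t x ⊓ l t y := hl_inf t x y
    rw [inf_eq_left.mpr h] at this
    rw [this]; exact inf_le_right
  have rmono : ∀ (t : T) {x y : Y}, x ≤ y → r x t ≤ r y t := by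
    intro t x y h
    have : r (x ⊓ y) t = r x t ⊓ r y t := hr_inf t x y
    rw [inf_eq_left.mpr h] at this
    rw [this]; exact inf_le_right
  refine ⟨fun y => ⟨by rw [hr_one]; exact heps y, hl_one y⟩, ?_, fun t s y _ => hl_mul t s y, ?_⟩
  · intro t s y
    rw [hr_mul]
    constructor
    · intro h
      refine ⟨le_trans h (rmono s (heps _)), ?_⟩
      calc l s y ≤ l s (r (r eps t) s) := lmono s h
        _ = r eps t ⊓ l s eps := hlr s _
        _ ≤ r eps t := inf_le_left
    · rintro ⟨h1, h2⟩
      have : r (l s y) s = r eps s ⊓ y := hrl s y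
      rw [inf_eq_right.mpr h1] at this
      calc y = r (l s y) s := this.symm
        _ ≤ r (r eps t) s := rmono s h2
  · intro t
    refine ⟨fun y _ => lmono t (heps y), fun x hx => ⟨r x t, rmono t (heps x), ?_⟩, ?_⟩
    · rw [hlr]; exact inf_eq_left.mpr hx
    · intro y y' hy hy'
      constructor
      · intro h
        have h1 : r (l t y) t = y := by rw [hrl]; exact inf_eq_right.mpr hy
        have h2 : r (l t y') t = y' := by rw [hrl]; exact inf_eq_right.mpr hy'
        calc y = r (l t y) t := h1.symm
          _ ≤ r (l t y') t := rmono t h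
          _ = y' := h2
      · exact lmono t
end

section
/- Let T be a monoid, Y a semilattice with identity ε, and (*,•) a double action of T on Y. Then in Y*_mT = {(y,t) ∈ Y × T : y ≤ t*ε}, with multiplication (x,s)(y,t) = (x ∧ s*y, st), the identity x ∧ s*y = s*((x•s) ∧ y) holds whenever x ≤ s*ε; consequently the multiplication of Y*_mT coincides with (x,s)(y,t) = (s*((x•s) ∧ y), st). -/
/-- Let `T` be a monoid, `Y` a semilattice with identity `eps`, and `(l, r)` a
double action of `T` on `Y`. Then in `Y *_m T = {(y,t) : y ≤ t * eps}`, with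
multiplication `(x,s)(y,t) = (x ⊓ s * y, s t)`, the identity
`x ⊓ s * y = s * ((x • s) ⊓ y)` holds whenever `x ≤ s * eps`; consequently the
multiplication of `Y *_m T` coincides with `(x,s)(y,t) = (s * ((x • s) ⊓ y), s t)`. -/
theorem stmt19 {T Y : Type*} [Monoid T] [SemilatticeInf Y]
    (eps : Y) (heps : ∀ y : Y, y ≤ eps)
    (l : T → Y → Y) (r : Y → T → Y)
    -- `l` is a left action, `r` a right action
    (hl_one : ∀ y : Y, l 1 y = y)
    (hl_mul : ∀ (s t : T) (y : Y), l (s * t) y = l s (l t y))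
    (hr_one : ∀ y : Y, r y 1 = y)
    (hr_mul : ∀ (s t : T) (y : Y), r y (s * t) = r (r y s) t)
    -- both preserve meets
    (hl_inf : ∀ (t : T) (x y : Y), l t (x ⊓ y) = l t x ⊓ l t y)
    (hr_inf : ∀ (t : T) (x y : Y), r (x ⊓ y) t = r x t ⊓ r y t)
    -- compatibility conditions of a double action
    (hrl : ∀ (t : T) (x : Y), r (l t x) t = r eps t ⊓ x)
    (hlr : ∀ (t : T) (x : Y), l t (r x t) = x ⊓ l t eps) :
    -- the key identity, valid whenever `x ≤ s * eps`
    (∀ (s : T) (x y : Y), x ≤ l s eps → x ⊓ l s y = l s (r x s ⊓ y)) ∧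
    -- hence the two expressions for the product on `Y *_m T` coincide
    (∀ (s t : T) (x y : Y), x ≤ l s eps → y ≤ l t eps →
      ((x ⊓ l s y, s * t) : Y × T) = (l s (r x s ⊓ y), s * t)) := by
  have key : ∀ (s : T) (x y : Y), x ≤ l s eps → x ⊓ l s y = l s (r x s ⊓ y) := by
    intro s x y hx
    rw [hl_inf, hlr, inf_eq_left.mpr hx]
  exact ⟨key, fun s t x y hx _ => by rw [key s x y hx]⟩
end
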